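/- Let u : A × Θ → ℝ be continuous with u(a,·) continuous and with partial derivative u_θ > 0 everywhere (A, Θ compact intervals). Fix a ∈ A and θ₁ < θ₂ < θ₃ in Θ. If v : A × Θ → ℝ has partial derivative v_θ in θ and the ratio v_θ(a,θ)/u_θ(a,θ) is (weakly) increasing in θ, then (v(a,θ₃)−v(a,θ₂))·(u(a,θ₂)−u(a,θ₁)) − (v(a,θ₂)−v(a,θ₁))·(u(a,θ₃)−u(a,θ₂)) ≥ 0; if v_θ/u_θ is strictly increasing in θ, the inequality is strict. -/
import Mathlib


/-- If `v_θ/u_θ` is (strictly) increasing in `θ`, then the cross-difference expression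
`(v(a,θ₃)−v(a,θ₂))(u(a,θ₂)−u(a,θ₁)) − (v(a,θ₂)−v(a,θ₁))(u(a,θ₃)−u(a,θ₂))` is
nonnegative (positive). -/
theorem stmt_4 (aL aR tL tR : ℝ) (hA : aL ≤ aR) (hT : tL ≤ tR)
    (u v uθ vθ : ℝ → ℝ → ℝ)
    (hucont : ContinuousOn (fun p : ℝ × ℝ => u p.1 p.2) (Set.Icc aL aR ×ˢ Set.Icc tL tR))
    (huθcont : ContinuousOn (fun p : ℝ × ℝ => uθ p.1 p.2) (Set.Icc aL aR ×ˢ Set.Icc tL tR))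
    (hvθcont : ContinuousOn (fun p : ℝ × ℝ => vθ p.1 p.2) (Set.Icc aL aR ×ˢ Set.Icc tL tR))
    (huderiv : ∀ a ∈ Set.Icc aL aR, ∀ θ ∈ Set.Icc tL tR,
      HasDerivAt (fun t => u a t) (uθ a θ) θ)
    (hvderiv : ∀ a ∈ Set.Icc aL aR, ∀ θ ∈ Set.Icc tL tR,
      HasDerivAt (fun t => v a t) (vθ a θ) θ)
    (huθpos : ∀ a ∈ Set.Icc aL aR, ∀ θ ∈ Set.Icc tL tR, 0 < uθ a θ)
    (a : ℝ) (ha : a ∈ Set.Icc aL aR)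
    (θ₁ θ₂ θ₃ : ℝ) (hθ₁ : θ₁ ∈ Set.Icc tL tR) (hθ₃ : θ₃ ∈ Set.Icc tL tR)
    (h12 : θ₁ < θ₂) (h23 : θ₂ < θ₃)
    (hmono : ∀ s ∈ Set.Icc tL tR, ∀ t ∈ Set.Icc tL tR, s ≤ t →
      vθ a s / uθ a s ≤ vθ a t / uθ a t) :
    0 ≤ (v a θ₃ - v a θ₂) * (u a θ₂ - u a θ₁) - (v a θ₂ - v a θ₁) * (u a θ₃ - u a θ₂) ∧
    ((∀ s ∈ Set.Icc tL tR, ∀ t ∈ Set.Icc tL tR, s < t →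
        vθ a s / uθ a s < vθ a t / uθ a t) →
      0 < (v a θ₃ - v a θ₂) * (u a θ₂ - u a θ₁) - (v a θ₂ - v a θ₁) * (u a θ₃ - u a θ₂)) := by
  have hθ₂ : θ₂ ∈ Set.Icc tL tR := ⟨hθ₁.1.trans h12.le, h23.le.trans hθ₃.2⟩
  -- continuity of slices
  have hmaps : ∀ t ∈ Set.Icc tL tR, (a, t) ∈ Set.Icc aL aR ×ˢ Set.Icc tL tR := by
    intro t ht; exact ⟨ha, ht⟩
  have hcontslice : ∀ w : ℝ → ℝ → ℝ,
      ContinuousOn (fun p : ℝ × ℝ => w p.1 p.2) (Set.Icc aL aR ×ˢ Set.Icc tL tR) →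
      ContinuousOn (fun t => w a t) (Set.Icc tL tR) := by
    intro w hw
    exact hw.comp (by fun_prop) hmaps
  have huθc := hcontslice uθ huθcont
  have hvθc := hcontslice vθ hvθcont
  -- subinterval inclusions
  have hsub12' : Set.Icc θ₁ θ₂ ⊆ Set.Icc tL tR := Set.Icc_subset_Icc hθ₁.1 hθ₂.2
  have hsub23' : Set.Icc θ₂ θ₃ ⊆ Set.Icc tL tR := Set.Icc_subset_Icc hθ₂.1 hθ₃.2
  have hsub12 : Set.uIcc θ₁ θ₂ ⊆ Set.Icc tL tR := by
    rw [Set.uIcc_of_le h12.le]; exact hsub12'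
  have hsub23 : Set.uIcc θ₂ θ₃ ⊆ Set.Icc tL tR := by
    rw [Set.uIcc_of_le h23.le]; exact hsub23'
  set r₂ := vθ a θ₂ / uθ a θ₂ with hr₂
  -- integrability
  have hint : ∀ (c : ℝ) (α β : ℝ), Set.uIcc α β ⊆ Set.Icc tL tR →
      IntervalIntegrable (fun t => vθ a t - c * uθ a t) MeasureTheory.volume α β := by
    intro c α β hsub
    exact ((hvθc.mono hsub).sub ((continuousOn_const.mul (huθc.mono hsub)))).intervalIntegrable
  have hintu : ∀ (α β : ℝ), Set.uIcc α β ⊆ Set.Icc tL tR →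
      IntervalIntegrable (fun t => uθ a t) MeasureTheory.volume α β := by
    intro α β hsub; exact (huθc.mono hsub).intervalIntegrable
  -- FTC identities
  have ftc : ∀ (c : ℝ) (α β : ℝ), Set.uIcc α β ⊆ Set.Icc tL tR →
      (∫ t in α..β, (vθ a t - c * uθ a t)) =
        (v a β - c * u a β) - (v a α - c * u a α) := by
    intro c α β hsub
    refine intervalIntegral.integral_eq_sub_of_hasDerivAt
      (f := fun t => v a t - c * u a t) (fun t ht => ?_) (hint c α β hsub)
    exact (hvderiv a ha t (hsub ht)).sub ((huderiv a ha t (hsub ht)).const_mul c)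
  have ftcu : ∀ (α β : ℝ), Set.uIcc α β ⊆ Set.Icc tL tR →
      (∫ t in α..β, uθ a t) = u a β - u a α := by
    intro α β hsub
    exact intervalIntegral.integral_eq_sub_of_hasDerivAt
      (fun t ht => huderiv a ha t (hsub ht)) (hintu α β hsub)
  -- u is increasing
  have hu12 : 0 < u a θ₂ - u a θ₁ := by
    rw [← ftcu θ₁ θ₂ hsub12]
    refine intervalIntegral.intervalIntegral_pos_of_pos_on (hintu θ₁ θ₂ hsub12)
      (fun t ht => huθpos a ha t (hsub12' (Set.Ioo_subset_Icc_self ht))) h12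
  have hu23 : 0 < u a θ₃ - u a θ₂ := by
    rw [← ftcu θ₂ θ₃ hsub23]
    refine intervalIntegral.intervalIntegral_pos_of_pos_on (hintu θ₂ θ₃ hsub23)
      (fun t ht => huθpos a ha t (hsub23' (Set.Ioo_subset_Icc_self ht))) h23
  -- nonnegativity of the key integrands
  have hkey : ∀ t ∈ Set.Icc tL tR, θ₂ ≤ t → 0 ≤ vθ a t - r₂ * uθ a t := by
    intro t ht h2t
    have h := hmono θ₂ hθ₂ t ht h2t
    have hpos := huθpos a ha t ht
    rw [le_div_iff₀ hpos] at h
    linarith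
  have hkey' : ∀ t ∈ Set.Icc tL tR, t ≤ θ₂ → vθ a t - r₂ * uθ a t ≤ 0 := by
    intro t ht ht2
    have h := hmono t ht θ₂ hθ₂ ht2
    have hpos := huθpos a ha t ht
    rw [div_le_iff₀ hpos] at h
    linarith
  -- the two one-sided estimates
  have hB : 0 ≤ (v a θ₃ - v a θ₂) - r₂ * (u a θ₃ - u a θ₂) := by
    have := ftc r₂ θ₂ θ₃ hsub23
    have hnn : 0 ≤ ∫ t in θ₂..θ₃, (vθ a t - r₂ * uθ a t) := by
      refine intervalIntegral.integral_nonneg h23.le (fun t ht => ?_)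
      exact hkey t (hsub23' ht) ht.1
    linarith
  have hC : r₂ * (u a θ₂ - u a θ₁) - (v a θ₂ - v a θ₁) ≥ 0 := by
    have := ftc r₂ θ₁ θ₂ hsub12
    have hnp : (∫ t in θ₁..θ₂, (vθ a t - r₂ * uθ a t)) ≤ 0 := by
      have h0 : 0 ≤ ∫ t in θ₁..θ₂, -(vθ a t - r₂ * uθ a t) :=
        intervalIntegral.integral_nonneg h12.le (fun t ht => by
          have := hkey' t (hsub12' ht) ht.2; linarith)
      rw [intervalIntegral.integral_neg] at h0
      linarith
    linarith
  constructor
  · nlinarith [mul_nonneg hB hu12.le, mul_nonneg hC hu23.le]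
  · intro hstrict
    -- strict version of hB
    have hB' : 0 < (v a θ₃ - v a θ₂) - r₂ * (u a θ₃ - u a θ₂) := by
      have := ftc r₂ θ₂ θ₃ hsub23
      have hpos : 0 < ∫ t in θ₂..θ₃, (vθ a t - r₂ * uθ a t) := by
        refine intervalIntegral.intervalIntegral_pos_of_pos_on (hint r₂ θ₂ θ₃ hsub23)
          (fun t ht => ?_) h23
        have htmem : t ∈ Set.Icc tL tR :=
          hsub23' (Set.Ioo_subset_Icc_self ht)
        have h := hstrict θ₂ hθ₂ t htmem ht.1
        have hposu := huθpos a ha t htmem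
        rw [lt_div_iff₀ hposu] at h
        linarith
      linarith
    nlinarith [mul_pos hB' hu12, mul_nonneg hC hu23.le]
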